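/- Work in E = EuclideanSpace ℝ (Fin 3). Fix a safety distance r > 0, a constant c > r, positive gains k_p, k_v, k_o, constants 0 < ε < η, and continuously differentiable functions h_p, h_v : ℝ → ℝ with ε ≤ h_p(s) ≤ η and ε ≤ h_v(s) ≤ η for all s. Let Ω* : ℝ → (E →ₗ[ℝ] E) be continuous, bounded in operator norm, and pointwise skew-adjoint, let e* : ℝ → E be differentiable with ‖e*(t)‖ = c and (e*)'(t) = Ω*(t)(e*(t)) for all t, and let w : ℝ → E be continuous and bounded. Let ẽ, ν̃ : ℝ → E be differentiable; set e(t) = ẽ(t) + e*(t), d(t) = ‖e(t)‖ − r, g(t) = e(t)/‖e(t)‖, φ(t) = ⟪g(t), ν̃(t)⟫/d(t), and suppose the perturbed closed-loop equations ẽ'(t) = Ω*(t)ẽ(t) + ν̃(t) and ν̃'(t) = −Ω*(t)ν̃(t) − k_p·h_p(‖ẽ(t)‖²)·ẽ(t) − k_v·h_v(‖ν̃(t)‖)·ν̃(t) − k_o·φ(t)·g(t) − w(t) hold at every t ≥ 0 at which d(t) > 0, and that ẽ and ν̃ are bounded on [0, ∞). If d(0) > 0, then d(t) > 0 for all t ≥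 0 and the divergent flow φ is bounded on [0, ∞). -/

import Mathlib

open Filter
open scoped RealInnerProductSpace

local notation "E" => EuclideanSpace ℝ (Fin 3)

lemma my_hasDerivAt_norm {F : Type*} [NormedAddCommGroup F] [InnerProductSpace ℝ F]
    {f : ℝ → F} {f' : F} {t : ℝ} (hf : HasDerivAt f f' t) (h0 : f t ≠ 0) :
    HasDerivAt (fun u => ‖f u‖) (⟪f t, f'⟫ / ‖f t‖) t := by
  have hq : HasDerivAt (fun u => ‖f u‖ ^ 2) (2 * ⟪f t, f'⟫) t := hf.norm_sq
  have hne : ‖f t‖ ^ 2 ≠ 0 := pow_ne_zero 2 (norm_ne_zero_iff.mpr h0)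
  have h2 := (Real.hasDerivAt_sqrt hne).comp t hq
  have hsq : (fun u => Real.sqrt (‖f u‖ ^ 2)) = fun u => ‖f u‖ := by
    funext u; rw [Real.sqrt_sq (norm_nonneg _)]
  rw [Function.comp_def, hsq] at h2
  refine h2.congr_deriv ?_
  rw [Real.sqrt_sq (norm_nonneg _)]
  field_simp

set_option maxHeartbeats 4000000 in
/-- Item 1 of Proposition 1: for the fully distributed controller, the edge
error dynamics are perturbed by a bounded continuous signal `w`; still, if
`d 0 > 0` then `d` stays positive for all `t ≥ 0` and the divergent flow
`φ` is bounded on `[0, ∞)`. -/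
theorem perturbed_collision_avoidance
    (r c k_p k_v k_o ε η : ℝ)
    (hr : 0 < r) (hc : r < c) (hkp : 0 < k_p) (hkv : 0 < k_v) (hko : 0 < k_o)
    (hε : 0 < ε) (hεη : ε < η)
    (h_p h_v : ℝ → ℝ) (hhp : ContDiff ℝ 1 h_p) (hhv : ContDiff ℝ 1 h_v)
    (hhp_bd : ∀ s, ε ≤ h_p s ∧ h_p s ≤ η) (hhv_bd : ∀ s, ε ≤ h_v s ∧ h_v s ≤ η)
    (Ω : ℝ → E →L[ℝ] E) (hΩc : Continuous Ω) (hΩbdd : ∃ M, ∀ t, ‖Ω t‖ ≤ M)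
    (hΩskew : ∀ t (x y : E), ⟪Ω t x, y⟫ = -⟪x, Ω t y⟫)
    (estar : ℝ → E) (hestar : Differentiable ℝ estar)
    (hestar_norm : ∀ t, ‖estar t‖ = c)
    (hestar_dyn : ∀ t, deriv estar t = Ω t (estar t))
    (w : ℝ → E) (hw_cont : Continuous w) (hw_bdd : ∃ M, ∀ t, ‖w t‖ ≤ M)
    (etil νtil : ℝ → E)
    (hetil : Differentiable ℝ etil) (hνtil : Differentiable ℝ νtil)
    (e : ℝ → E) (he : ∀ t, e t = etil t + estar t)
    (d : ℝ → ℝ) (hd : ∀ t, d t = ‖e t‖ - r)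
    (g : ℝ → E) (hg : ∀ t, g t = ‖e t‖⁻¹ • e t)
    (φ : ℝ → ℝ) (hφ : ∀ t, φ t = ⟪g t, νtil t⟫ / d t)
    (heq : ∀ t ≥ (0:ℝ), 0 < d t →
      deriv etil t = Ω t (etil t) + νtil t ∧
      deriv νtil t = -(Ω t (νtil t)) - (k_p * h_p (‖etil t‖ ^ 2)) • etil t
        - (k_v * h_v ‖νtil t‖) • νtil t - (k_o * φ t) • g t - w t)
    (hbdd : ∃ M, ∀ t ≥ (0:ℝ), ‖etil t‖ ≤ M ∧ ‖νtil t‖ ≤ M)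
    (hd0 : 0 < d 0) :
    (∀ t ≥ (0:ℝ), 0 < d t) ∧ ∃ M, ∀ t ≥ (0:ℝ), |φ t| ≤ M := by
  classical
  obtain ⟨M₀, hM₀⟩ := hbdd
  obtain ⟨MΩ, hMΩ⟩ := hΩbdd
  obtain ⟨Mw, hMw⟩ := hw_bdd
  have hM₀0 : 0 ≤ M₀ := le_trans (norm_nonneg _) (hM₀ 0 le_rfl).1
  have hMΩ0 : 0 ≤ MΩ := le_trans (norm_nonneg _) (hMΩ 0)
  have hMw0 : 0 ≤ Mw := le_trans (norm_nonneg _) (hMw 0)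
  have hη : 0 < η := hε.trans hεη
  set N : ℝ → ℝ := fun u => ‖e u‖ with hN_def
  set p : ℝ → ℝ := fun u => ⟪e u, νtil u⟫ with hp_def
  set s : ℝ → ℝ := fun u => p u / N u with hs_def
  set C : ℝ := 2*MΩ*M₀ + k_p*η*M₀ + k_v*η*M₀ + Mw + M₀^2/r + 1 with hC_def
  have hC1 : 1 ≤ C := by
    have h1 : 0 ≤ 2*MΩ*M₀ := by positivity
    have h2 : 0 ≤ k_p*η*M₀ := by positivity
    have h3 : 0 ≤ k_v*η*M₀ := by positivity
    have h4 : 0 ≤ M₀^2/r := by positivity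
    simp only [hC_def]; linarith
  have hC0 : 0 < C := lt_of_lt_of_le one_pos hC1
  -- basic regularity
  have he_fun : e = fun u => etil u + estar u := funext he
  have he_diff : Differentiable ℝ e := by rw [he_fun]; exact hetil.add hestar
  have he_cont : Continuous e := he_diff.continuous
  have hN_cont : Continuous N := he_cont.norm
  have hp_cont : Continuous p := he_cont.inner hνtil.continuous
  have hd_fun : d = fun u => N u - r := funext (fun u => hd u)
  have hd_cont : Continuous d := by rw [hd_fun]; exact hN_cont.sub continuous_const
  -- φ = s / d pointwise
  have hφs : ∀ t, φ t = s t / d t := by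
    intro t
    rw [hφ t, hg t]
    have : ⟪‖e t‖⁻¹ • e t, νtil t⟫ = ‖e t‖⁻¹ * ⟪e t, νtil t⟫ := real_inner_smul_left _ _ _
    rw [this]
    simp only [hs_def, hp_def, hN_def]
    rw [inv_mul_eq_div]
  have hφ_fun : φ = fun u => s u / d u := funext hφs
  -- N is large when d positive
  have hNr : ∀ t, 0 < d t → r < N t := by
    intro t ht; have := hd t; simp only [hN_def]; linarith
  have hsM : ∀ t, 0 ≤ t → 0 < N t → |s t| ≤ M₀ := by
    intro t ht hNt
    have hp_le : |p t| ≤ N t * M₀ := by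
      have h1 : |⟪e t, νtil t⟫| ≤ ‖e t‖ * ‖νtil t‖ := abs_real_inner_le_norm _ _
      have h2 := (hM₀ t ht).2
      have : ‖e t‖ * ‖νtil t‖ ≤ ‖e t‖ * M₀ :=
        mul_le_mul_of_nonneg_left h2 (norm_nonneg _)
      simp only [hp_def, hN_def]; linarith
    simp only [hs_def]
    rw [abs_div, abs_of_pos hNt, div_le_iff₀ hNt]
    linarith [hp_le]
  -- the key derivative package
  have hKD : ∀ t, 0 ≤ t → 0 < d t →
      HasDerivAt d (s t) t ∧ ∃ R, HasDerivAt s (-(k_o * φ t) + R) t ∧ |R| ≤ C := by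
    intro t ht0 htd
    have hNt : r < N t := hNr t htd
    have hNpos : 0 < N t := hr.trans hNt
    have he0 : e t ≠ 0 := by
      simp only [hN_def] at hNpos; exact norm_pos_iff.mp hNpos
    obtain ⟨h1, h2⟩ := heq t ht0 htd
    have hetil' : HasDerivAt etil (Ω t (etil t) + νtil t) t := by
      have := (hetil t).hasDerivAt; rwa [h1] at this
    have hestar' : HasDerivAt estar (Ω t (estar t)) t := by
      have := (hestar t).hasDerivAt; rwa [hestar_dyn t] at this
    have he' : HasDerivAt e (Ω t (e t) + νtil t) t := by
      have h := hetil'.add hestar'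
      have h2 : HasDerivAt e (Ω t (etil t) + νtil t + Ω t (estar t)) t := by
        rw [he_fun]; exact h
      have h3 : Ω t (etil t) + νtil t + Ω t (estar t) = Ω t (e t) + νtil t := by
        rw [he t, map_add]; abel
      rwa [h3] at h2
    set a : ℝ := k_p * h_p (‖etil t‖ ^ 2) with ha_def
    set b : ℝ := k_v * h_v ‖νtil t‖ with hb_def
    set ν' : E := -(Ω t (νtil t)) - a • etil t - b • νtil t - (k_o * φ t) • g t - w t with hν'_def
    have hν'at : HasDerivAt νtil ν' t := by
      have := (hνtil t).hasDerivAt; rwa [h2] at this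
    have hp' : HasDerivAt p (⟪e t, ν'⟫ + ⟪Ω t (e t) + νtil t, νtil t⟫) t := by
      simp only [hp_def]
      exact he'.inner ℝ hν'at
    have hskew0 : ⟪e t, Ω t (e t)⟫ = 0 := by
      have h3 := hΩskew t (e t) (e t)
      have h4 : ⟪Ω t (e t), e t⟫ = ⟪e t, Ω t (e t)⟫ := real_inner_comm _ _
      linarith
    have hN' : HasDerivAt N (s t) t := by
      have := my_hasDerivAt_norm he' he0
      simp only [hN_def]
      convert this using 1
      rw [inner_add_right, hskew0, zero_add]
    have hd' : HasDerivAt d (s t) t := by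
      rw [hd_fun]; exact hN'.sub_const r
    refine ⟨hd', ?_⟩
    -- derivative of s via quotient rule
    have hs' : HasDerivAt s
        (((⟪e t, ν'⟫ + ⟪Ω t (e t) + νtil t, νtil t⟫) * N t - p t * s t) / (N t) ^ 2) t := by
      simp only [hs_def]
      exact hp'.div hN' (ne_of_gt hNpos)
    set A : ℝ := ⟪Ω t (e t), νtil t⟫ with hA_def
    set R : ℝ := (2*A + ‖νtil t‖^2 - (s t)^2 - a * ⟪e t, etil t⟫ - b * p t - ⟪e t, w t⟫) / N t
      with hR_def
    refine ⟨R, ?_, ?_⟩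
    · convert hs' using 1
      -- scalar identity
      have hegN : ⟪e t, g t⟫ = N t := by
        rw [hg t, real_inner_smul_right, real_inner_self_eq_norm_sq]
        show ‖e t‖⁻¹ * ‖e t‖ ^ 2 = ‖e t‖
        have hne : ‖e t‖ ≠ 0 := norm_ne_zero_iff.mpr he0
        field_simp
      have hiν' : ⟪e t, ν'⟫ = A - a * ⟪e t, etil t⟫ - b * p t - k_o * φ t * N t - ⟪e t, w t⟫ := by
        simp only [hν'_def]
        rw [inner_sub_right, inner_sub_right, inner_sub_right, inner_sub_right,
          inner_neg_right, real_inner_smul_right, real_inner_smul_right,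
          real_inner_smul_right, hegN]
        have h7 : ⟪e t, Ω t (νtil t)⟫ = -A := by
          have h5 := hΩskew t (e t) (νtil t)
          have h6 : ⟪Ω t (e t), νtil t⟫ = A := rfl
          linarith
        rw [h7]
        simp only [hp_def]
        ring
      have hiel : ⟪Ω t (e t) + νtil t, νtil t⟫ = A + ‖νtil t‖^2 := by
        rw [inner_add_left, real_inner_self_eq_norm_sq]
      have key : ∀ (ko ph Nt P A' nn ae be ew : ℝ), Nt ≠ 0 →
          -(ko*ph) + (2*A' + nn - (P/Nt)^2 - ae - be - ew)/Nt
          = ((A' - ae - be - ko*ph*Nt - ew + (A' + nn)) * Nt - P*(P/Nt))/Nt^2 := by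
        intro ko ph Nt P A' nn ae be ew h
        field_simp
        ring
      have hst : s t = p t / N t := rfl
      rw [hiν', hiel, hR_def, hst]
      exact key k_o (φ t) (N t) (p t) A (‖νtil t‖^2) (a * ⟪e t, etil t⟫) (b * p t)
        (⟪e t, w t⟫) (ne_of_gt hNpos)
    · -- the bound |R| ≤ C
      have hA_bd : |A| ≤ MΩ * N t * M₀ := by
        have h1 : |A| ≤ ‖Ω t (e t)‖ * ‖νtil t‖ := abs_real_inner_le_norm _ _
        have h2 : ‖Ω t (e t)‖ ≤ ‖Ω t‖ * ‖e t‖ := (Ω t).le_opNorm _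
        have h3 : ‖Ω t‖ ≤ MΩ := hMΩ t
        have h4 := (hM₀ t ht0).2
        have h5 : ‖Ω t (e t)‖ * ‖νtil t‖ ≤ (MΩ * N t) * M₀ := by
          apply mul_le_mul _ h4 (norm_nonneg _) (by positivity)
          calc ‖Ω t (e t)‖ ≤ ‖Ω t‖ * ‖e t‖ := h2
            _ ≤ MΩ * N t := by
                simp only [hN_def]
                exact mul_le_mul h3 le_rfl (norm_nonneg _) hMΩ0
        linarith
      have hs_abs : |s t| ≤ ‖νtil t‖ := by
        simp only [hs_def]
        rw [abs_div, abs_of_pos hNpos, div_le_iff₀ hNpos]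
        have h1 : |p t| ≤ ‖e t‖ * ‖νtil t‖ := abs_real_inner_le_norm _ _
        have h2 : ‖e t‖ * ‖νtil t‖ ≤ ‖νtil t‖ * N t := by
          have : (‖e t‖ : ℝ) = N t := rfl
          rw [this]; ring_nf; exact le_rfl
        linarith
      have hnn_bd : 0 ≤ ‖νtil t‖^2 - (s t)^2 ∧ ‖νtil t‖^2 - (s t)^2 ≤ M₀^2 := by
        constructor
        · have h1 : |s t|^2 ≤ ‖νtil t‖^2 := pow_le_pow_left₀ (abs_nonneg _) hs_abs 2
          rw [sq_abs] at h1; linarith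
        · have h2 := (hM₀ t ht0).2
          have h3 : ‖νtil t‖^2 ≤ M₀^2 := pow_le_pow_left₀ (norm_nonneg _) h2 2
          have h4 := sq_nonneg (s t)
          linarith
      have hee_bd : |⟪e t, etil t⟫| ≤ N t * M₀ := by
        have h1 : |⟪e t, etil t⟫| ≤ ‖e t‖ * ‖etil t‖ := abs_real_inner_le_norm _ _
        have h2 : ‖e t‖ * ‖etil t‖ ≤ ‖e t‖ * M₀ :=
          mul_le_mul_of_nonneg_left (hM₀ t ht0).1 (norm_nonneg _)
        have h3 : (‖e t‖ : ℝ) * M₀ = N t * M₀ := rfl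
        linarith [h3 ▸ h2]
      have hp_bd : |p t| ≤ N t * M₀ := by
        have h1 : |p t| ≤ ‖e t‖ * ‖νtil t‖ := abs_real_inner_le_norm _ _
        have h2 : ‖e t‖ * ‖νtil t‖ ≤ ‖e t‖ * M₀ :=
          mul_le_mul_of_nonneg_left (hM₀ t ht0).2 (norm_nonneg _)
        have h3 : (‖e t‖ : ℝ) * M₀ = N t * M₀ := rfl
        linarith [h3 ▸ h2]
      have hew_bd : |⟪e t, w t⟫| ≤ N t * Mw := by
        have h1 : |⟪e t, w t⟫| ≤ ‖e t‖ * ‖w t‖ := abs_real_inner_le_norm _ _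
        have h2 : ‖e t‖ * ‖w t‖ ≤ ‖e t‖ * Mw :=
          mul_le_mul_of_nonneg_left (hMw t) (norm_nonneg _)
        have h3 : (‖e t‖ : ℝ) * Mw = N t * Mw := rfl
        linarith [h3 ▸ h2]
      have ha_bd : 0 < a ∧ a ≤ k_p * η := by
        constructor
        · exact mul_pos hkp (lt_of_lt_of_le hε (hhp_bd _).1)
        · exact mul_le_mul_of_nonneg_left (hhp_bd _).2 hkp.le
      have hb_bd : 0 < b ∧ b ≤ k_v * η := by
        constructor
        · exact mul_pos hkv (lt_of_lt_of_le hε (hhv_bd _).1)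
        · exact mul_le_mul_of_nonneg_left (hhv_bd _).2 hkv.le
      have haee : |a * ⟪e t, etil t⟫| ≤ (k_p * η) * (N t * M₀) := by
        rw [abs_mul, abs_of_pos ha_bd.1]
        exact mul_le_mul ha_bd.2 hee_bd (abs_nonneg _) (by positivity)
      have hbp : |b * p t| ≤ (k_v * η) * (N t * M₀) := by
        rw [abs_mul, abs_of_pos hb_bd.1]
        exact mul_le_mul hb_bd.2 hp_bd (abs_nonneg _) (by positivity)
      have hnum : |2*A + ‖νtil t‖^2 - (s t)^2 - a * ⟪e t, etil t⟫ - b * p t - ⟪e t, w t⟫|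
          ≤ (2*MΩ*M₀ + k_p*η*M₀ + k_v*η*M₀ + Mw) * N t + M₀^2 := by
        have g1 := abs_le.mp hA_bd
        have g2 := abs_le.mp haee
        have g3 := abs_le.mp hbp
        have g4 := abs_le.mp hew_bd
        rw [abs_le]
        constructor <;> linarith [hnn_bd.1, hnn_bd.2]
      rw [hR_def, abs_div, abs_of_pos hNpos, div_le_iff₀ hNpos]
      have hM2 : M₀^2 ≤ (M₀^2/r) * N t := by
        rw [div_mul_eq_mul_div, le_div_iff₀ hr]
        have := mul_le_mul_of_nonneg_left hNt.le (sq_nonneg M₀)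
        linarith
      calc |2*A + ‖νtil t‖^2 - (s t)^2 - a * ⟪e t, etil t⟫ - b * p t - ⟪e t, w t⟫|
          ≤ (2*MΩ*M₀ + k_p*η*M₀ + k_v*η*M₀ + Mw) * N t + M₀^2 := hnum
        _ ≤ (2*MΩ*M₀ + k_p*η*M₀ + k_v*η*M₀ + Mw) * N t + (M₀^2/r) * N t := by linarith
        _ ≤ C * N t := by
            have hCeq : C * N t = (2*MΩ*M₀ + k_p*η*M₀ + k_v*η*M₀ + Mw) * N t
                + (M₀^2/r) * N t + N t := by rw [hC_def]; ring
            rw [hCeq]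
            linarith [hNpos]
  -- continuity of s on sets where N > 0
  have hs_contOn : ∀ A : Set ℝ, (∀ u ∈ A, 0 < N u) → ContinuousOn s A := by
    intro A hA
    exact (hp_cont.continuousOn).div (hN_cont.continuousOn) (fun u hu => (hA u hu).ne')
  -- Part 1: positivity of d
  have hpos : ∀ t ≥ (0:ℝ), 0 < d t := by
    by_contra hcon
    push_neg at hcon
    obtain ⟨t₂, ht₂0, ht₂d⟩ := hcon
    have ht₂pos : 0 < t₂ := by
      rcases eq_or_lt_of_le ht₂0 with h | h
      · exfalso; rw [← h] at ht₂d; linarith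
      · exact h
    set Z : Set ℝ := Set.Icc 0 t₂ ∩ {u | d u ≤ 0} with hZ_def
    have hZclosed : IsClosed Z := isClosed_Icc.inter (isClosed_le hd_cont continuous_const)
    have hZne : Z.Nonempty := ⟨t₂, ⟨ht₂0, le_rfl⟩, ht₂d⟩
    have hZbdd : BddBelow Z := (bddBelow_Icc : BddBelow (Set.Icc (0:ℝ) t₂)).mono Set.inter_subset_left
    set T := sInf Z with hT_def
    have hTZ : T ∈ Z := hZclosed.csInf_mem hZne hZbdd
    obtain ⟨⟨hT0, hTt₂⟩, hdT⟩ := hTZ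
    have hTpos : 0 < T := by
      rcases eq_or_lt_of_le hT0 with h | h
      · exfalso; rw [← h] at hdT; simp only [Set.mem_setOf_eq] at hdT; linarith
      · exact h
    have hpre : ∀ u, 0 ≤ u → u < T → 0 < d u := by
      intro u h1 h2
      by_contra h
      push_neg at h
      have hu : u ∈ Z := ⟨⟨h1, h2.le.trans hTt₂⟩, h⟩
      exact absurd (csInf_le hZbdd hu) (not_le.mpr h2)
    have hdT0 : d T = 0 := by
      refine le_antisymm hdT ?_
      have htd : Filter.Tendsto d (nhdsWithin T (Set.Iio T)) (nhds (d T)) :=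
        (hd_cont.continuousAt).continuousWithinAt.tendsto
      refine ge_of_tendsto htd ?_
      filter_upwards [Ioo_mem_nhdsLT_of_mem (Set.mem_Ioc.mpr ⟨hTpos, le_rfl⟩)] with u hu
      exact (hpre u hu.1.le hu.2).le
    have hNpos' : ∀ u ∈ Set.Icc 0 T, 0 < N u := by
      rintro u ⟨h1, h2⟩
      rcases eq_or_lt_of_le h2 with h | h
      · subst h
        have hNT : N T = r := by
          have h5 := hd T
          have h6 : ‖e T‖ = r := by linarith [hdT0]
          simpa only [hN_def] using h6
        rw [hNT]; exact hr
      · exact hr.trans (hNr u (hpre u h1 h))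
    set H : ℝ → ℝ := fun u => d u * Real.exp (s u / k_o) * Real.exp (C * u / k_o) with hH_def
    have hHcont : ContinuousOn H (Set.Icc 0 T) := by
      apply ContinuousOn.mul
      · apply ContinuousOn.mul hd_cont.continuousOn
        exact Real.continuous_exp.comp_continuousOn ((hs_contOn _ hNpos').div_const k_o)
      · exact (Real.continuous_exp.comp ((continuous_const.mul continuous_id).div_const
          k_o)).continuousOn
    have hHx : ∀ x ∈ interior (Set.Icc (0:ℝ) T), ∃ v, HasDerivAt H v x ∧ 0 ≤ v := by
      rw [interior_Icc]
      rintro x ⟨hx1, hx2⟩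
      have hdx_pos : 0 < d x := hpre x hx1.le hx2
      obtain ⟨hdx, R, hsx, hR⟩ := hKD x hx1.le hdx_pos
      rw [hφs x] at hsx
      set E1 := Real.exp (s x / k_o) with hE1_def
      set E2 := Real.exp (C * x / k_o) with hE2_def
      have e1 : HasDerivAt (fun u => Real.exp (s u / k_o))
          (E1 * ((-(k_o * (s x / d x)) + R) / k_o)) x := (hsx.div_const k_o).exp
      have e2 : HasDerivAt (fun u => Real.exp (C * u / k_o)) (E2 * (C / k_o)) x := by
        have h0 : HasDerivAt (fun u : ℝ => C * u / k_o) (C / k_o) x := by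
          have := ((hasDerivAt_id x).const_mul C).div_const k_o
          simpa using this
        exact h0.exp
      have hH' : HasDerivAt H
          ((s x * E1 + d x * (E1 * ((-(k_o * (s x / d x)) + R) / k_o))) * E2
            + d x * E1 * (E2 * (C / k_o))) x := (hdx.mul e1).mul e2
      refine ⟨_, hH', ?_⟩
      have hveq : (s x * E1 + d x * (E1 * ((-(k_o * (s x / d x)) + R) / k_o))) * E2
            + d x * E1 * (E2 * (C / k_o)) = E1 * E2 * (d x * (R + C)) / k_o := by
        field_simp
        ring
      rw [hveq]
      have hRC : 0 ≤ R + C := by have := (abs_le.mp hR).1; linarith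
      have : 0 ≤ E1 * E2 * (d x * (R + C)) :=
        mul_nonneg (mul_nonneg (Real.exp_pos _).le (Real.exp_pos _).le)
          (mul_nonneg hdx_pos.le hRC)
      exact div_nonneg this hko.le
    have hHmono : MonotoneOn H (Set.Icc 0 T) := by
      apply monotoneOn_of_deriv_nonneg (convex_Icc 0 T) hHcont
      · intro x hx
        exact ((hHx x hx).choose_spec.1.differentiableAt).differentiableWithinAt
      · intro x hx
        obtain ⟨v, hv, h0⟩ := hHx x hx
        rw [hv.deriv]; exact h0
    have h01 : H 0 ≤ H T :=
      hHmono ⟨le_rfl, hT0⟩ ⟨hT0, le_rfl⟩ hT0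
    have hH0 : 0 < H 0 := by
      simp only [hH_def]
      exact mul_pos (mul_pos hd0 (Real.exp_pos _)) (Real.exp_pos _)
    have hHT : H T = 0 := by
      simp only [hH_def, hdT0, zero_mul]
    rw [hHT] at h01
    linarith
  -- continuity of φ at nonnegative times
  have hφ_contAt : ∀ t, 0 ≤ t → ContinuousAt φ t := by
    intro t ht
    have hdt := hpos t ht
    have hNt : 0 < N t := hr.trans (hNr t hdt)
    rw [hφ_fun]
    exact ((hp_cont.continuousAt.div hN_cont.continuousAt hNt.ne').div
      hd_cont.continuousAt hdt.ne')
  have hst_eq : ∀ t, 0 ≤ t → s t = φ t * d t := by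
    intro t ht
    rw [hφs t, div_mul_cancel₀ _ (hpos t ht).ne']
  -- Part B : upper bound on φ
  have hCk : 0 < C / k_o := div_pos hC0 hko
  set K := max (C / k_o) (φ 0) with hK_def
  have hKpos : 0 < K := lt_of_lt_of_le hCk (le_max_left _ _)
  have hupper : ∀ t ≥ (0:ℝ), φ t ≤ K := by
    by_contra hcon
    push_neg at hcon
    obtain ⟨t₂, ht₂0, ht₂⟩ := hcon
    have ht₂pos : 0 < t₂ := by
      rcases eq_or_lt_of_le ht₂0 with h | h
      · exfalso; rw [← h] at ht₂; exact absurd (le_max_right (C / k_o) (φ 0)) (not_le.mpr ht₂)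
      · exact h
    set S : Set ℝ := Set.Icc 0 t₂ ∩ φ ⁻¹' Set.Iic K with hS_def
    have hφcontOn : ContinuousOn φ (Set.Icc 0 t₂) :=
      fun u hu => (hφ_contAt u hu.1).continuousWithinAt
    have hSclosed : IsClosed S :=
      hφcontOn.preimage_isClosed_of_isClosed isClosed_Icc isClosed_Iic
    have h0S : (0:ℝ) ∈ S := by
      refine ⟨⟨le_rfl, ht₂0⟩, ?_⟩
      simp only [Set.mem_preimage, Set.mem_Iic]
      exact le_max_right _ _
    have hSbdd : BddAbove S := (bddAbove_Icc (a := (0:ℝ)) (b := t₂)).mono Set.inter_subset_left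
    set t₁ := sSup S with ht₁_def
    have ht₁S : t₁ ∈ S := hSclosed.csSup_mem ⟨0, h0S⟩ hSbdd
    obtain ⟨⟨ht₁0, ht₁t₂⟩, hφt₁⟩ := ht₁S
    simp only [Set.mem_preimage, Set.mem_Iic] at hφt₁
    have ht₁lt : t₁ < t₂ := by
      rcases eq_or_lt_of_le ht₁t₂ with h | h
      · exfalso; rw [h] at hφt₁; linarith only [hφt₁, ht₂]
      · exact h
    have hmid : ∀ u ∈ Set.Ioc t₁ t₂, K < φ u := by
      rintro u ⟨h1, h2⟩
      by_contra hh
      push_neg at hh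
      have hu : u ∈ S := ⟨⟨ht₁0.trans h1.le, h2⟩, hh⟩
      exact absurd (le_csSup hSbdd hu) (not_le.mpr h1)
    have hφt₁_ge : K ≤ φ t₁ := by
      have htnd : Filter.Tendsto φ (nhdsWithin t₁ (Set.Ioi t₁)) (nhds (φ t₁)) :=
        (hφ_contAt t₁ ht₁0).continuousWithinAt.tendsto
      refine ge_of_tendsto htnd ?_
      filter_upwards [Ioc_mem_nhdsGT ht₁lt] with u hu
      exact (hmid u hu).le
    have hNIcc : ∀ u ∈ Set.Icc t₁ t₂, 0 < N u :=
      fun u hu => hr.trans (hNr u (hpos u (ht₁0.trans hu.1)))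
    have hdmono : MonotoneOn d (Set.Icc t₁ t₂) := by
      apply monotoneOn_of_deriv_nonneg (convex_Icc _ _) hd_cont.continuousOn
      · intro x hx
        rw [interior_Icc] at hx
        have hx0 : 0 ≤ x := ht₁0.trans hx.1.le
        exact ((hKD x hx0 (hpos x hx0)).1.differentiableAt).differentiableWithinAt
      · intro x hx
        rw [interior_Icc] at hx
        have hx0 : 0 ≤ x := ht₁0.trans hx.1.le
        have hdx := hpos x hx0
        rw [(hKD x hx0 hdx).1.deriv]
        have hφx : C / k_o < φ x := lt_of_le_of_lt (le_max_left _ _) (hmid x ⟨hx.1, hx.2.le⟩)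
        rw [hst_eq x hx0]
        exact mul_nonneg (hCk.trans hφx).le hdx.le
    have hsanti : AntitoneOn s (Set.Icc t₁ t₂) := by
      apply antitoneOn_of_deriv_nonpos (convex_Icc _ _) (hs_contOn _ hNIcc)
      · intro x hx
        rw [interior_Icc] at hx
        have hx0 : 0 ≤ x := ht₁0.trans hx.1.le
        obtain ⟨R, hsx, hR⟩ := (hKD x hx0 (hpos x hx0)).2
        exact hsx.differentiableAt.differentiableWithinAt
      · intro x hx
        rw [interior_Icc] at hx
        have hx0 : 0 ≤ x := ht₁0.trans hx.1.le
        obtain ⟨R, hsx, hR⟩ := (hKD x hx0 (hpos x hx0)).2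
        rw [hsx.deriv]
        have hφx : C / k_o < φ x := lt_of_le_of_lt (le_max_left _ _) (hmid x ⟨hx.1, hx.2.le⟩)
        have h1 : C ≤ k_o * φ x := by
          rw [div_lt_iff₀ hko] at hφx
          calc C ≤ φ x * k_o := hφx.le
            _ = k_o * φ x := mul_comm _ _
        have h2 := (abs_le.mp hR).2
        linarith only [h1, h2]
    have hd1 : 0 < d t₁ := hpos t₁ ht₁0
    have hd2 : 0 < d t₂ := hpos t₂ ht₂0
    have hs12 : s t₂ ≤ s t₁ := hsanti ⟨le_rfl, ht₁lt.le⟩ ⟨ht₁lt.le, le_rfl⟩ ht₁lt.le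
    have hd12 : d t₁ ≤ d t₂ := hdmono ⟨le_rfl, ht₁lt.le⟩ ⟨ht₁lt.le, le_rfl⟩ ht₁lt.le
    have hfin : φ t₂ * d t₂ ≤ K * d t₂ := by
      calc φ t₂ * d t₂ = s t₂ := (hst_eq t₂ ht₂0).symm
        _ ≤ s t₁ := hs12
        _ = φ t₁ * d t₁ := hst_eq t₁ ht₁0
        _ ≤ K * d t₁ := mul_le_mul_of_nonneg_right hφt₁ hd1.le
        _ ≤ K * d t₂ := mul_le_mul_of_nonneg_left hd12 hKpos.le
    have : φ t₂ ≤ K := (mul_le_mul_iff_left₀ hd2).mp hfin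
    exact absurd this (not_le.mpr ht₂)
  -- Part C : lower bound on φ
  set k₁ := k_o / (C + 1) with hk₁_def
  have hk₁pos : 0 < k₁ := div_pos hko (by linarith)
  set lam : ℝ := (C + 1) / k_o with hlam_def
  have hlam_pos : 0 < lam := div_pos (by linarith) hko
  have hC1ne : C + 1 ≠ 0 := by intro h; linarith
  have hk₁lam : k₁ * lam = 1 := by
    rw [hk₁_def, hlam_def, div_mul_div_comm, mul_comm k_o (C + 1)]
    exact div_self (mul_ne_zero hC1ne hko.ne')
  set lam0 := lam + |φ 0| with hlam0_def
  have hlam0_pos : 0 < lam0 := by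
    simp only [hlam0_def]; linarith only [abs_nonneg (φ 0), hlam_pos]
  have hlam_le : lam ≤ lam0 := by
    simp only [hlam0_def]; linarith only [abs_nonneg (φ 0)]
  set X := Real.exp (2 * M₀ / k₁) with hX_def
  have hXpos : 0 < X := Real.exp_pos _
  have hX1 : 1 ≤ X := Real.one_le_exp (div_nonneg (by linarith) hk₁pos.le)
  set Xinv := Real.exp (-(2 * M₀) / k₁) with hXinv_def
  have hXinvpos : 0 < Xinv := Real.exp_pos _
  have hXXinv : X * Xinv = 1 := by
    rw [hX_def, hXinv_def, ← Real.exp_add]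
    rw [show 2 * M₀ / k₁ + -(2 * M₀) / k₁ = 0 by ring, Real.exp_zero]
  set Lam := lam0 * X + 1 with hLam_def
  have hLam_ge : lam0 + 1 ≤ Lam := by
    have h1 : lam0 * 1 ≤ lam0 * X := mul_le_mul_of_nonneg_left hX1 hlam0_pos.le
    simp only [hLam_def]; linarith only [h1]
  have hLampos : 0 < Lam := by linarith only [hLam_ge, hlam0_pos]
  have hlower : ∀ t ≥ (0:ℝ), -Lam ≤ φ t := by
    by_contra hcon
    push_neg at hcon
    obtain ⟨t₂, ht₂0, ht₂⟩ := hcon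
    have hφ0_ge : -lam0 ≤ φ 0 := by
      simp only [hlam0_def]; linarith only [neg_abs_le (φ 0), hlam_pos]
    have ht₂pos : 0 < t₂ := by
      rcases eq_or_lt_of_le ht₂0 with h | h
      · exfalso; rw [← h] at ht₂; linarith only [ht₂, hφ0_ge, hLam_ge, hlam0_pos]
      · exact h
    set S : Set ℝ := Set.Icc 0 t₂ ∩ φ ⁻¹' Set.Ici (-lam0) with hS_def
    have hφcontOn : ContinuousOn φ (Set.Icc 0 t₂) :=
      fun u hu => (hφ_contAt u hu.1).continuousWithinAt
    have hSclosed : IsClosed S :=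
      hφcontOn.preimage_isClosed_of_isClosed isClosed_Icc isClosed_Ici
    have h0S : (0:ℝ) ∈ S := by
      refine ⟨⟨le_rfl, ht₂0⟩, ?_⟩
      simp only [Set.mem_preimage, Set.mem_Ici]
      exact hφ0_ge
    have hSbdd : BddAbove S := (bddAbove_Icc (a := (0:ℝ)) (b := t₂)).mono Set.inter_subset_left
    set t₁ := sSup S with ht₁_def
    have ht₁S : t₁ ∈ S := hSclosed.csSup_mem ⟨0, h0S⟩ hSbdd
    obtain ⟨⟨ht₁0, ht₁t₂⟩, hφt₁⟩ := ht₁S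
    simp only [Set.mem_preimage, Set.mem_Ici] at hφt₁
    have ht₁lt : t₁ < t₂ := by
      rcases eq_or_lt_of_le ht₁t₂ with h | h
      · exfalso; rw [h] at hφt₁; linarith only [hφt₁, ht₂, hLam_ge, hlam0_pos]
      · exact h
    have hmid : ∀ u ∈ Set.Ioc t₁ t₂, φ u < -lam0 := by
      rintro u ⟨h1, h2⟩
      by_contra hh
      push_neg at hh
      have hu : u ∈ S := ⟨⟨ht₁0.trans h1.le, h2⟩, hh⟩
      exact absurd (le_csSup hSbdd hu) (not_le.mpr h1)
    have hd1 : 0 < d t₁ := hpos t₁ ht₁0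
    have hd2 : 0 < d t₂ := hpos t₂ ht₂0
    have hNIcc : ∀ u ∈ Set.Icc t₁ t₂, 0 < N u :=
      fun u hu => hr.trans (hNr u (hpos u (ht₁0.trans hu.1)))
    -- d is antitone on [t₁, t₂]
    have hdanti : AntitoneOn d (Set.Icc t₁ t₂) := by
      apply antitoneOn_of_deriv_nonpos (convex_Icc _ _) hd_cont.continuousOn
      · intro x hx
        rw [interior_Icc] at hx
        have hx0 : 0 ≤ x := ht₁0.trans hx.1.le
        exact ((hKD x hx0 (hpos x hx0)).1.differentiableAt).differentiableWithinAt
      · intro x hx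
        rw [interior_Icc] at hx
        have hx0 : 0 ≤ x := ht₁0.trans hx.1.le
        have hdx := hpos x hx0
        rw [(hKD x hx0 hdx).1.deriv, hst_eq x hx0]
        have hφx : φ x < -lam0 := hmid x ⟨hx.1, hx.2.le⟩
        have hφx0 : φ x ≤ 0 := by linarith only [hφx, hlam0_pos]
        exact mul_nonpos_of_nonpos_of_nonneg hφx0 hdx.le
    -- the auxiliary monotone quantity Y
    set Y : ℝ → ℝ := fun u => Real.exp (s u / k₁) * d u with hY_def
    have hYcont : ContinuousOn Y (Set.Icc t₁ t₂) :=
      (Real.continuous_exp.comp_continuousOn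
        ((hs_contOn _ hNIcc).div_const k₁)).mul hd_cont.continuousOn
    have hYx : ∀ x ∈ interior (Set.Icc t₁ t₂), ∃ v, HasDerivAt Y v x ∧ 0 ≤ v := by
      intro x hx
      rw [interior_Icc] at hx
      have hx0 : 0 ≤ x := ht₁0.trans hx.1.le
      have hdx_pos := hpos x hx0
      obtain ⟨hdx, R, hsx, hR⟩ := hKD x hx0 hdx_pos
      have hφx : φ x < -lam0 := hmid x ⟨hx.1, hx.2.le⟩
      set E1 := Real.exp (s x / k₁) with hE1_def
      have hY' : HasDerivAt Y
          (E1 * ((-(k_o * φ x) + R) / k₁) * d x + E1 * s x) x :=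
        ((hsx.div_const k₁).exp.mul hdx)
      refine ⟨_, hY', ?_⟩
      have hsxval : s x = φ x * d x := hst_eq x hx0
      have hko_k₁ : k_o - k₁ = k₁ * C := by
        have hmul : k₁ * (C + 1) = k_o := by
          rw [hk₁_def]; exact div_mul_cancel₀ _ hC1ne
        linear_combination (-1 : ℝ) * hmul
      have hkey : 0 ≤ R - (k_o - k₁) * φ x := by
        have h1 : (k_o - k₁) * φ x ≤ (k₁ * C) * (-lam0) := by
          rw [hko_k₁]
          have hkC : 0 ≤ k₁ * C := mul_nonneg hk₁pos.le hC0.le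
          exact mul_le_mul_of_nonneg_left hφx.le hkC
        have h2 : (k₁ * C) * (-lam0) ≤ -C := by
          have h3 : k₁ * lam ≤ k₁ * lam0 := mul_le_mul_of_nonneg_left hlam_le hk₁pos.le
          rw [hk₁lam] at h3
          have h5 : C * 1 ≤ C * (k₁ * lam0) := mul_le_mul_of_nonneg_left h3 hC0.le
          linarith only [h5]
        have h4 := (abs_le.mp hR).1
        linarith only [h1, h2, h4]
      have hveq : E1 * ((-(k_o * φ x) + R) / k₁) * d x + E1 * s x
          = E1 * d x * (R - (k_o - k₁) * φ x) / k₁ := by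
        rw [hsxval]
        field_simp
        ring
      rw [hveq]
      exact div_nonneg (mul_nonneg (mul_nonneg (Real.exp_pos _).le hdx_pos.le) hkey) hk₁pos.le
    have hYmono : MonotoneOn Y (Set.Icc t₁ t₂) := by
      apply monotoneOn_of_deriv_nonneg (convex_Icc _ _) hYcont
      · intro x hx
        exact ((hYx x hx).choose_spec.1.differentiableAt).differentiableWithinAt
      · intro x hx
        obtain ⟨v, hv, h0⟩ := hYx x hx
        rw [hv.deriv]; exact h0
    -- consequences
    have hY12 : Real.exp (s t₁ / k₁) * d t₁ ≤ Real.exp (s t₂ / k₁) * d t₂ :=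
      hYmono ⟨le_rfl, ht₁lt.le⟩ ⟨ht₁lt.le, le_rfl⟩ ht₁lt.le
    have hd21 : d t₂ ≤ d t₁ := hdanti ⟨le_rfl, ht₁lt.le⟩ ⟨ht₁lt.le, le_rfl⟩ ht₁lt.le
    have hsM₁ : |s t₁| ≤ M₀ := hsM t₁ ht₁0 (hNIcc t₁ ⟨le_rfl, ht₁lt.le⟩)
    have hsM₂ : |s t₂| ≤ M₀ := hsM t₂ ht₂0 (hNIcc t₂ ⟨ht₁lt.le, le_rfl⟩)
    have hs12 : s t₁ ≤ s t₂ := by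
      by_contra hh
      push_neg at hh
      have h1 : Real.exp (s t₂ / k₁) * d t₂ ≤ Real.exp (s t₂ / k₁) * d t₁ :=
        mul_le_mul_of_nonneg_left hd21 (Real.exp_pos _).le
      have h2 : Real.exp (s t₂ / k₁) * d t₁ < Real.exp (s t₁ / k₁) * d t₁ :=
        mul_lt_mul_of_pos_right (Real.exp_lt_exp.mpr ((div_lt_div_iff_of_pos_right hk₁pos).mpr hh)) hd1
      linarith only [h1, h2, hY12]
    have hxd : d t₁ * Xinv ≤ d t₂ := by
      have h2 : Real.exp (-(s t₂) / k₁) * (Real.exp (s t₁ / k₁) * d t₁)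
          ≤ Real.exp (-(s t₂) / k₁) * (Real.exp (s t₂ / k₁) * d t₂) :=
        mul_le_mul_of_nonneg_left hY12 (Real.exp_pos _).le
      have h3 : Real.exp (-(s t₂) / k₁) * Real.exp (s t₂ / k₁) = 1 := by
        rw [← Real.exp_add, show -(s t₂) / k₁ + s t₂ / k₁ = 0 by ring, Real.exp_zero]
      have h4 : Real.exp (-(s t₂) / k₁) * Real.exp (s t₁ / k₁)
          = Real.exp ((s t₁ - s t₂) / k₁) := by
        rw [← Real.exp_add]; congr 1; ring
      have h5 : Xinv ≤ Real.exp ((s t₁ - s t₂) / k₁) := by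
        rw [hXinv_def]
        apply Real.exp_le_exp.mpr
        apply (div_le_div_iff_of_pos_right hk₁pos).mpr
        have hq1 := (abs_le.mp hsM₁).1
        have hq2 := (abs_le.mp hsM₂).2
        linarith only [hq1, hq2]
      have h6 : d t₁ * Xinv ≤ d t₁ * Real.exp ((s t₁ - s t₂) / k₁) :=
        mul_le_mul_of_nonneg_left h5 hd1.le
      calc d t₁ * Xinv ≤ d t₁ * Real.exp ((s t₁ - s t₂) / k₁) := h6
        _ = Real.exp (-(s t₂) / k₁) * (Real.exp (s t₁ / k₁) * d t₁) := by
            rw [← h4]; ring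
        _ ≤ Real.exp (-(s t₂) / k₁) * (Real.exp (s t₂ / k₁) * d t₂) := h2
        _ = d t₂ := by rw [← mul_assoc, h3, one_mul]
    -- final contradiction
    have hA1 : s t₂ < -Lam * d t₂ := by
      rw [hst_eq t₂ ht₂0]
      exact mul_lt_mul_of_pos_right ht₂ hd2
    have hA2 : -lam0 * d t₁ ≤ s t₁ := by
      rw [hst_eq t₁ ht₁0]
      exact mul_le_mul_of_nonneg_right hφt₁ hd1.le
    have hA3 : -Lam * d t₂ ≤ -Lam * (d t₁ * Xinv) :=
      mul_le_mul_of_nonpos_left hxd (by linarith only [hLampos])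
    have hB : -lam0 * d t₁ < -Lam * (d t₁ * Xinv) := by
      linarith only [hA1, hA2, hA3, hs12]
    have hB2 : (-lam0 * d t₁) * X < (-Lam * (d t₁ * Xinv)) * X :=
      mul_lt_mul_of_pos_right hB hXpos
    have hB3 : (-Lam * (d t₁ * Xinv)) * X = -Lam * d t₁ := by
      linear_combination (-Lam * d t₁) * hXXinv
    rw [hB3] at hB2
    have hB4 : -Lam * d t₁ = -(lam0 * X) * d t₁ - d t₁ := by
      rw [hLam_def]; ring
    linarith only [hB2, hB4, hd1]
  refine ⟨hpos, max K Lam, ?_⟩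
  intro t ht
  rw [abs_le]
  constructor
  · have h1 := hlower t ht
    have h2 : Lam ≤ max K Lam := le_max_right _ _
    linarith only [h1, h2]
  · exact (hupper t ht).trans (le_max_left _ _)
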